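/- (Theorem 3.1: stationary points are the global optimum with probability 1.) Let n ≥ 1 and k be integers with m = n + k, and suppose k ≥ 3n−2 if m−2n+1 = k−n+1 is odd and k ≥ 3n−1 if k−n+1 is even. Then for Lebesgue-almost every y ∈ ℝ^k (equivalently, with probability 1 when y_1,…,y_k are i.i.d. nondegenerate Gaussian), the following holds: for every x ∈ ℝⁿ, setting z = (x_1,…,x_n, y_1,…,y_k) ∈ ℝ^m and b_i = |(F z)_i| for i = 0,…,m−1, every u ∈ ℝ^m whose last k entries equal y (u_{n+l} = y_l for l = 1,…,k) and which satisfies the stationarity condition u = ũ (where ũ is the phase-matched synthesis of u with magnitudes b) must equal z, i.e. the stationary point is the unique global optimum of the loss f over the constraint set Ω = {u : u_{n+l} = y_l}. -/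

import Mathlib

open MeasureTheory

/-- The `m`-point discrete Fourier transform of `w` (entries indexed `0, …, m-1`):
`(F w)_i = ∑_{l=0}^{m-1} w_l · exp(-2πι i l / m)`. -/
noncomputable def dft (m : ℕ) (w : ℕ → ℂ) (i : ℕ) : ℂ :=
  ∑ l ∈ Finset.range m,
    w l * Complex.exp (-((2 : ℂ) * (Real.pi : ℂ) * Complex.I * (i : ℂ) * (l : ℂ)) / (m : ℂ))

/-- The phase function: `sgn(w) = w / |w|` for `w ≠ 0` and `sgn(0) = 1`. -/
noncomputable def csgn (w : ℂ) : ℂ :=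
  if w = 0 then 1 else w / (‖w‖ : ℂ)

/-- The phase-matched synthesis of `u ∈ ℂ^m` with target magnitudes `b`:
`ũ_l = (1/m) ∑_{i=0}^{m-1} exp(2πι i l / m) · b_i · sgn((F u)_i)`. -/
noncomputable def utilde (m : ℕ) (b : ℕ → ℝ) (u : ℕ → ℂ) (l : ℕ) : ℂ :=
  ((m : ℂ))⁻¹ * ∑ i ∈ Finset.range m,
    Complex.exp ((2 : ℂ) * (Real.pi : ℂ) * Complex.I * (i : ℂ) * (l : ℂ) / (m : ℂ)) *
      (b i : ℂ) * csgn (dft m u i)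

/-- The combination `z(x) = (x_0, …, x_{n-1}, y_0, …, y_{k-1}, 0, …) ∈ ℝ^{n+k}`. -/
noncomputable def zhatR (n k : ℕ) (y x : ℕ → ℝ) (p : ℕ) : ℝ :=
  if p < n then x p else if p < n + k then y (p - n) else 0


lemma abs_csgn_aux (w : ℂ) : ‖(if w = 0 then 1 else w / (‖w‖ : ℂ))‖ = 1 := by
  split_ifs with h
  · simp
  · rw [norm_div, Complex.norm_real, norm_norm, div_self (norm_ne_zero_iff.2 h)]

lemma sum_exp_pow (m : ℕ) (hm : 0 < m) (a : ℤ) :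
    ∑ i ∈ Finset.range m, Complex.exp (2 * (Real.pi : ℂ) * Complex.I * a / m) ^ i
      = if (m : ℤ) ∣ a then (m : ℂ) else 0 := by
  have hm' : (m : ℂ) ≠ 0 := Nat.cast_ne_zero.2 hm.ne'
  have h2pi : (2 : ℂ) * Real.pi * Complex.I ≠ 0 := by
    simp [Real.pi_ne_zero, Complex.I_ne_zero, Complex.ofReal_ne_zero]
  set ζ := Complex.exp (2 * (Real.pi : ℂ) * Complex.I * a / m) with hζ
  have hζm : ζ ^ m = 1 := by
    rw [hζ, ← Complex.exp_nat_mul]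
    have : (m : ℂ) * (2 * (Real.pi : ℂ) * Complex.I * a / m) = a * (2 * Real.pi * Complex.I) := by
      field_simp
    rw [this, Complex.exp_int_mul_two_pi_mul_I]
  have hone : ζ = 1 ↔ (m : ℤ) ∣ a := by
    rw [hζ, Complex.exp_eq_one_iff]
    constructor
    · rintro ⟨t, ht⟩
      refine ⟨t, ?_⟩
      have : (a : ℂ) = (t : ℂ) * m := by
        field_simp at ht
        have h := ht
        -- ht : 2 * π * I * a = t * (2 * π * I) * m  (roughly)
        apply mul_left_cancel₀ h2pi
        linear_combination (2 * (Real.pi : ℂ) * Complex.I) * ht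
      rw [mul_comm] at this; exact_mod_cast this
    · rintro ⟨t, rfl⟩
      exact ⟨t, by field_simp; norm_cast⟩
  by_cases h : (m : ℤ) ∣ a
  · rw [if_pos h]
    simp [hone.mpr h]
  · rw [if_neg h]
    have hζ1 : ζ ≠ 1 := fun hh => h (hone.mp hh)
    rw [geom_sum_eq hζ1 m, hζm]
    simp




lemma not_dvd_sub (m i j : ℕ) (hi : i < m) (hj : j < m) (hne : j ≠ i) :
    ¬ (m : ℤ) ∣ ((j : ℤ) - (i : ℤ)) := by
  intro h
  have habs : |(j : ℤ) - (i : ℤ)| < (m : ℤ) := by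
    rw [abs_sub_lt_iff]
    constructor <;> [skip; skip] <;> omega
  have := Int.eq_zero_of_abs_lt_dvd h habs
  omega

lemma dft_fixed (m : ℕ) (hm : 0 < m) (b : ℕ → ℝ) (u : ℕ → ℂ)
    (hfix : ∀ l < m, u l = utilde m b u l) (i : ℕ) (hi : i < m) :
    dft m u i = (b i : ℂ) * csgn (dft m u i) := by
  have hm' : (m : ℂ) ≠ 0 := Nat.cast_ne_zero.2 hm.ne'
  have hexp : ∀ j l : ℕ,
      Complex.exp ((2 : ℂ) * (Real.pi : ℂ) * Complex.I * (j : ℂ) * (l : ℂ) / (m : ℂ)) *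
        Complex.exp (-((2 : ℂ) * (Real.pi : ℂ) * Complex.I * (i : ℂ) * (l : ℂ)) / (m : ℂ))
      = Complex.exp (2 * (Real.pi : ℂ) * Complex.I * (((j : ℤ) - (i : ℤ) : ℤ) : ℂ) / (m : ℂ)) ^ l := by
    intro j l
    rw [← Complex.exp_nat_mul, ← Complex.exp_add]
    congr 1
    push_cast
    field_simp
    ring
  have key : dft m u i
      = ∑ j ∈ Finset.range m, (m : ℂ)⁻¹ * ((b j : ℂ) * csgn (dft m u j)) *
          ∑ l ∈ Finset.range m,
            Complex.exp (2 * (Real.pi : ℂ) * Complex.I * (((j : ℤ) - (i : ℤ) : ℤ) : ℂ) / (m : ℂ)) ^ l := by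
    rw [dft]
    rw [show (∑ l ∈ Finset.range m,
        u l * Complex.exp (-((2 : ℂ) * (Real.pi : ℂ) * Complex.I * (i : ℂ) * (l : ℂ)) / (m : ℂ)))
      = ∑ l ∈ Finset.range m, ∑ j ∈ Finset.range m,
          (m : ℂ)⁻¹ * ((b j : ℂ) * csgn (dft m u j)) *
            Complex.exp (2 * (Real.pi : ℂ) * Complex.I * (((j : ℤ) - (i : ℤ) : ℤ) : ℂ) / (m : ℂ)) ^ l from ?_]
    · rw [Finset.sum_comm]
      exact Finset.sum_congr rfl fun j _ => by rw [Finset.mul_sum]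
    · refine Finset.sum_congr rfl fun l hl => ?_
      rw [hfix l (Finset.mem_range.1 hl), utilde, mul_assoc, Finset.sum_mul, Finset.mul_sum]
      refine Finset.sum_congr rfl fun j hj => ?_
      rw [← hexp j l]
      ring
  refine key.trans ?_
  rw [Finset.sum_eq_single i]
  · rw [sum_exp_pow m hm ((i : ℤ) - (i : ℤ)), sub_self, if_pos (dvd_zero _)]
    field_simp
  · intro j hj hne
    rw [sum_exp_pow m hm _, if_neg (not_dvd_sub m i j hi (Finset.mem_range.1 hj) hne), mul_zero]
  · intro h
    exact absurd (Finset.mem_range.2 hi) h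

lemma abs_csgn (w : ℂ) : ‖csgn w‖ = 1 := by
  rw [csgn]; exact abs_csgn_aux w

lemma abs_dft_fixed (m : ℕ) (hm : 0 < m) (b : ℕ → ℝ) (u : ℕ → ℂ)
    (hfix : ∀ l < m, u l = utilde m b u l) (i : ℕ) (hi : i < m) (hb : 0 ≤ b i) :
    ‖dft m u i‖ = b i := by
  have h := dft_fixed m hm b u hfix i hi
  calc ‖dft m u i‖ = ‖(b i : ℂ) * csgn (dft m u i)‖ := by rw [← h]
    _ = b i := by
        rw [norm_mul, abs_csgn, mul_one, Complex.norm_real, Real.norm_of_nonneg hb]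

lemma dvd_iff_mod (m : ℕ) (t l' l : ℕ) (hl : l < m) :
    (m : ℤ) ∣ ((t : ℤ) + (l' : ℤ) - (l : ℤ)) ↔ l = (l' + t) % m := by
  have h1 : ((t : ℤ) + (l' : ℤ) - (l : ℤ)) = ((t + l' : ℕ) : ℤ) - (l : ℤ) := by push_cast; ring
  rw [h1, ← Nat.modEq_iff_dvd]
  unfold Nat.ModEq
  rw [Nat.mod_eq_of_lt hl, Nat.add_comm l' t]

lemma sum_if_dvd (m : ℕ) (hm : 0 < m) (t l' : ℕ) (g : ℕ → ℂ) :
    ∑ l ∈ Finset.range m, g l * (if (m : ℤ) ∣ ((t : ℤ) + (l' : ℤ) - (l : ℤ)) then (m : ℂ) else 0)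
      = g ((l' + t) % m) * m := by
  rw [Finset.sum_eq_single ((l' + t) % m)]
  · rw [if_pos ((dvd_iff_mod m t l' _ (Nat.mod_lt _ hm)).2 rfl)]
  · intro l hl hne
    rw [if_neg (fun h => hne ((dvd_iff_mod m t l' l (Finset.mem_range.1 hl)).1 h)), mul_zero]
  · intro h
    exact absurd (Finset.mem_range.2 (Nat.mod_lt _ hm)) h



open Complex in
lemma conj_dft (m : ℕ) (w : ℕ → ℝ) (i : ℕ) :
    (starRingEnd ℂ) (dft m (fun p => (w p : ℂ)) i)
      = ∑ l ∈ Finset.range m,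
          (w l : ℂ) * Complex.exp ((2 : ℂ) * (Real.pi : ℂ) * Complex.I * (i : ℂ) * (l : ℂ) / (m : ℂ)) := by
  rw [dft, map_sum]
  refine Finset.sum_congr rfl fun l _ => ?_
  rw [map_mul, Complex.conj_ofReal]
  congr 1
  rw [← Complex.exp_conj]
  congr 1
  simp only [map_div₀, map_neg, map_mul, Complex.conj_I, Complex.conj_ofReal, map_natCast,
    map_ofNat]
  ring

open Complex in
lemma sq_abs_c (v : ℂ) : ((‖v‖ : ℝ) : ℂ) ^ 2 = v * (starRingEnd ℂ) v := by
  rw [← Complex.ofReal_pow, Complex.sq_norm, Complex.mul_conj]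

lemma corr_formula (m : ℕ) (hm : 0 < m) (w : ℕ → ℝ) (t : ℕ) :
    ((m : ℂ)) * ∑ l ∈ Finset.range m, ((w ((l + t) % m) : ℂ) * (w l : ℂ))
      = ∑ i ∈ Finset.range m,
          Complex.exp (2 * (Real.pi : ℂ) * Complex.I * ((t : ℤ) : ℂ) / m) ^ i *
            ((‖dft m (fun p => (w p : ℂ)) i‖ : ℝ) : ℂ) ^ 2 := by
  have hm' : (m : ℂ) ≠ 0 := Nat.cast_ne_zero.2 hm.ne'
  have hmerge : ∀ i l l' : ℕ,
      Complex.exp (2 * (Real.pi : ℂ) * Complex.I * ((t : ℤ) : ℂ) / m) ^ i *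
        (Complex.exp (-((2 : ℂ) * (Real.pi : ℂ) * Complex.I * (i : ℂ) * (l : ℂ)) / (m : ℂ)) *
          Complex.exp ((2 : ℂ) * (Real.pi : ℂ) * Complex.I * (i : ℂ) * (l' : ℂ) / (m : ℂ)))
      = Complex.exp (2 * (Real.pi : ℂ) * Complex.I * (((t : ℤ) + (l' : ℤ) - (l : ℤ) : ℤ) : ℂ) / m) ^ i := by
    intro i l l'
    rw [← Complex.exp_nat_mul, ← Complex.exp_nat_mul, ← Complex.exp_add, ← Complex.exp_add]
    congr 1
    push_cast
    field_simp
    ring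
  calc ((m : ℂ)) * ∑ l ∈ Finset.range m, ((w ((l + t) % m) : ℂ) * (w l : ℂ))
      = ∑ l' ∈ Finset.range m,
          (∑ l ∈ Finset.range m, (w l : ℂ) *
            (if (m : ℤ) ∣ ((t : ℤ) + (l' : ℤ) - (l : ℤ)) then (m : ℂ) else 0)) * (w l' : ℂ) := by
        rw [Finset.mul_sum]
        refine Finset.sum_congr rfl fun l' _ => ?_
        rw [sum_if_dvd m hm t l']
        ring
    _ = ∑ l' ∈ Finset.range m, ∑ l ∈ Finset.range m, ((w l : ℂ) * (w l' : ℂ)) *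
          ∑ i ∈ Finset.range m,
            Complex.exp (2 * (Real.pi : ℂ) * Complex.I * (((t : ℤ) + (l' : ℤ) - (l : ℤ) : ℤ) : ℂ) / m) ^ i := by
        refine Finset.sum_congr rfl fun l' _ => ?_
        rw [Finset.sum_mul]
        refine Finset.sum_congr rfl fun l _ => ?_
        rw [sum_exp_pow m hm]
        ring
    _ = ∑ i ∈ Finset.range m,
          Complex.exp (2 * (Real.pi : ℂ) * Complex.I * ((t : ℤ) : ℂ) / m) ^ i *
            ((‖dft m (fun p => (w p : ℂ)) i‖ : ℝ) : ℂ) ^ 2 := by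
        calc ∑ l' ∈ Finset.range m, ∑ l ∈ Finset.range m, ((w l : ℂ) * (w l' : ℂ)) *
              ∑ i ∈ Finset.range m,
                Complex.exp (2 * (Real.pi : ℂ) * Complex.I * (((t : ℤ) + (l' : ℤ) - (l : ℤ) : ℤ) : ℂ) / m) ^ i
            = ∑ l' ∈ Finset.range m, ∑ l ∈ Finset.range m, ∑ i ∈ Finset.range m,
                ((w l : ℂ) * (w l' : ℂ)) *
                  Complex.exp (2 * (Real.pi : ℂ) * Complex.I * (((t : ℤ) + (l' : ℤ) - (l : ℤ) : ℤ) : ℂ) / m) ^ i :=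
              Finset.sum_congr rfl fun l' _ => Finset.sum_congr rfl fun l _ => Finset.mul_sum _ _ _
          _ = ∑ l' ∈ Finset.range m, ∑ i ∈ Finset.range m, ∑ l ∈ Finset.range m,
                ((w l : ℂ) * (w l' : ℂ)) *
                  Complex.exp (2 * (Real.pi : ℂ) * Complex.I * (((t : ℤ) + (l' : ℤ) - (l : ℤ) : ℤ) : ℂ) / m) ^ i :=
              Finset.sum_congr rfl fun l' _ => Finset.sum_comm
          _ = ∑ i ∈ Finset.range m, ∑ l' ∈ Finset.range m, ∑ l ∈ Finset.range m,
                ((w l : ℂ) * (w l' : ℂ)) *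
                  Complex.exp (2 * (Real.pi : ℂ) * Complex.I * (((t : ℤ) + (l' : ℤ) - (l : ℤ) : ℤ) : ℂ) / m) ^ i :=
              Finset.sum_comm
          _ = ∑ i ∈ Finset.range m,
                Complex.exp (2 * (Real.pi : ℂ) * Complex.I * ((t : ℤ) : ℂ) / m) ^ i *
                  ((‖dft m (fun p => (w p : ℂ)) i‖ : ℝ) : ℂ) ^ 2 := by
              refine Finset.sum_congr rfl fun i _ => ?_
              rw [Finset.sum_comm, sq_abs_c, conj_dft, dft, Finset.sum_mul_sum, Finset.mul_sum]
              refine Finset.sum_congr rfl fun l _ => ?_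
              rw [Finset.mul_sum]
              refine Finset.sum_congr rfl fun l' _ => ?_
              rw [← hmerge i l l']
              ring

lemma corr_eq (m : ℕ) (hm : 0 < m) (u z : ℕ → ℝ)
    (habs : ∀ i < m, ‖dft m (fun p => (u p : ℂ)) i‖
                   = ‖dft m (fun p => (z p : ℂ)) i‖) (t : ℕ) :
    ∑ l ∈ Finset.range m, u ((l + t) % m) * u l
      = ∑ l ∈ Finset.range m, z ((l + t) % m) * z l := by
  have hm' : (m : ℂ) ≠ 0 := Nat.cast_ne_zero.2 hm.ne'
  have h := (corr_formula m hm u t).trans ((Finset.sum_congr rfl fun i hi => by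
      rw [habs i (Finset.mem_range.1 hi)]).trans (corr_formula m hm z t).symm)
  have h2 := mul_left_cancel₀ hm' h
  exact_mod_cast h2

lemma split_corr (n k : ℕ) (hn : 0 < n) (u z : ℕ → ℝ)
    (huz : ∀ l, n ≤ l → l < n + k → u l = z l) (t : ℕ) (ht1 : n ≤ t) (ht2 : t + n ≤ n + k)
    (hcorr : ∑ l ∈ Finset.range (n + k), u ((l + t) % (n + k)) * u l
           = ∑ l ∈ Finset.range (n + k), z ((l + t) % (n + k)) * z l) :
    ∑ p ∈ Finset.range n, (u p - z p) * (z (p + t) + z (p + ((n + k) - t))) = 0 := by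
  set m := n + k with hm
  have h0 : ∑ l ∈ Finset.range m, (u ((l + t) % m) * u l - z ((l + t) % m) * z l) = 0 := by
    rw [Finset.sum_sub_distrib, hcorr, sub_self]
  have hpt : ∀ l < m, u ((l + t) % m) * u l - z ((l + t) % m) * z l
      = (if l < n then z (l + t) * (u l - z l) else 0)
        + (if m - t ≤ l ∧ l < m - t + n then z l * (u (l - (m - t)) - z (l - (m - t))) else 0) := by
    intro l hl
    by_cases h1 : l < n
    · have hlt : l + t < m := by omega
      have hmod : (l + t) % m = l + t := Nat.mod_eq_of_lt hlt
      have huzlt : u (l + t) = z (l + t) := huz _ (by omega) (by omega)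
      rw [hmod, huzlt, if_pos h1, if_neg (by omega)]
      ring
    · by_cases h2 : l < m - t
      · have hlt : l + t < m := by omega
        have hmod : (l + t) % m = l + t := Nat.mod_eq_of_lt hlt
        rw [hmod, huz l (by omega) (by omega), huz (l + t) (by omega) (by omega),
          if_neg h1, if_neg (by omega)]
        ring
      · have hge : m ≤ l + t := by omega
        have hmod : (l + t) % m = l + t - m := by
          rw [Nat.mod_eq_sub_mod hge, Nat.mod_eq_of_lt (by omega)]
        have hq : l + t - m = l - (m - t) := by omega
        rw [hmod, hq, huz l (by omega) (by omega), if_neg h1]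
        by_cases h3 : l - (m - t) < n
        · rw [if_pos ⟨by omega, by omega⟩]
          ring
        · rw [if_neg (by omega), huz (l - (m - t)) (by omega) (by omega)]
          ring
  have e1 : ∑ l ∈ Finset.range m, (if l < n then z (l + t) * (u l - z l) else 0)
      = ∑ p ∈ Finset.range n, z (p + t) * (u p - z p) := by
    rw [← Finset.sum_subset (Finset.range_subset_range.2 (show n ≤ m by omega))
      (fun x _ hx => if_neg (by simpa using hx))]
    exact Finset.sum_congr rfl fun p hp => if_pos (Finset.mem_range.1 hp)
  have e2 : ∑ l ∈ Finset.range m,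
        (if m - t ≤ l ∧ l < m - t + n then z l * (u (l - (m - t)) - z (l - (m - t))) else 0)
      = ∑ p ∈ Finset.range n, z (p + (m - t)) * (u p - z p) := by
    rw [← Finset.sum_subset (show Finset.Ico (m - t) (m - t + n) ⊆ Finset.range m by
        intro x hx
        rw [Finset.mem_Ico] at hx
        exact Finset.mem_range.2 (by omega))
      (fun x _ hx => if_neg (by simpa [Finset.mem_Ico] using hx))]
    rw [Finset.sum_Ico_eq_sum_range, show m - t + n - (m - t) = n from by omega]
    refine Finset.sum_congr rfl fun p hp => ?_
    have hp' := Finset.mem_range.1 hp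
    rw [if_pos ⟨by omega, by omega⟩, show m - t + p - (m - t) = p from by omega,
      show m - t + p = p + (m - t) from by omega]
  calc ∑ p ∈ Finset.range n, (u p - z p) * (z (p + t) + z (p + (m - t)))
      = ∑ l ∈ Finset.range m,
        ((if l < n then z (l + t) * (u l - z l) else 0)
          + (if m - t ≤ l ∧ l < m - t + n then z l * (u (l - (m - t)) - z (l - (m - t))) else 0)) := by
        rw [Finset.sum_add_distrib, e1, e2, ← Finset.sum_add_distrib]
        exact Finset.sum_congr rfl fun p _ => by ring
    _ = 0 := (Finset.sum_congr rfl fun l hl => (hpt l (Finset.mem_range.1 hl)).symm).trans h0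



lemma cons_continuous (k : ℕ) :
    Continuous fun q : (Fin k → ℝ) × ℝ => (Fin.cons q.2 q.1 : Fin (k + 1) → ℝ) := by
  refine continuous_pi fun j => ?_
  refine Fin.cases ?_ ?_ j
  · simpa using continuous_snd
  · intro i
    simp only [Fin.cons_succ]; exact (continuous_apply i).comp continuous_fst

lemma mvpoly_null : ∀ (k : ℕ) (P : MvPolynomial (Fin k) ℝ), P ≠ 0 →
    volume {y : Fin k → ℝ | MvPolynomial.eval y P = 0} = 0 := by
  intro k
  induction k with
  | zero =>
    intro P hP
    obtain ⟨c, rfl⟩ := MvPolynomial.C_surjective (Fin 0) P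
    have hc : c ≠ 0 := fun h => hP (by rw [h, map_zero])
    convert measure_empty
    · ext y
      simp [MvPolynomial.eval_C, hc]
    · infer_instance
  | succ k ih =>
    intro P hP
    set Q : Polynomial (MvPolynomial (Fin k) ℝ) := MvPolynomial.finSuccEquiv ℝ k P with hQ
    have hQ0 : Q ≠ 0 := by
      intro h
      exact hP ((MvPolynomial.finSuccEquiv ℝ k).injective (h.trans (map_zero _).symm))
    obtain ⟨j, hj⟩ : ∃ j, Q.coeff j ≠ 0 := by
      by_contra h
      push_neg at h
      exact hQ0 (Polynomial.ext fun j => by rw [h j, Polynomial.coeff_zero])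
    set T : Set ((Fin k → ℝ) × ℝ) :=
      {q | MvPolynomial.eval (Fin.cons q.2 q.1) P = 0} with hT
    have hTmeas : MeasurableSet T := by
      have hc : Continuous fun q : (Fin k → ℝ) × ℝ => MvPolynomial.eval (Fin.cons q.2 q.1) P :=
        (MvPolynomial.continuous_eval P).comp (cons_continuous k)
      exact hc.measurable (measurableSet_singleton 0)
    have hmp : MeasurePreserving
        (fun y : Fin (k + 1) → ℝ => ((fun j => y (Fin.succAbove 0 j), y 0) : (Fin k → ℝ) × ℝ))
        volume volume := by
      have h1 := volume_preserving_piFinSuccAbove (fun _ : Fin (k + 1) => ℝ) 0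
      have h2 : MeasurePreserving (Prod.swap : ℝ × (Fin k → ℝ) → (Fin k → ℝ) × ℝ)
          volume volume := MeasureTheory.Measure.measurePreserving_swap
      exact h2.comp h1
    have hpre : {y : Fin (k + 1) → ℝ | MvPolynomial.eval y P = 0}
        = (fun y : Fin (k + 1) → ℝ => ((fun j => y (Fin.succAbove 0 j), y 0) : (Fin k → ℝ) × ℝ)) ⁻¹' T := by
      ext y
      simp only [Set.mem_setOf_eq, Set.mem_preimage, hT]
      have : (Fin.cons (y 0) (fun j => y (Fin.succAbove 0 j)) : Fin (k + 1) → ℝ) = y := by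
        ext j
        refine Fin.cases ?_ ?_ j
        · simp
        · intro i; simp [Fin.succAbove]
      rw [this]
    rw [hpre, hmp.measure_preimage hTmeas.nullMeasurableSet]
    have hvol : (volume : Measure ((Fin k → ℝ) × ℝ)) = (volume : Measure (Fin k → ℝ)).prod volume := rfl
    rw [hvol, MeasureTheory.Measure.measure_prod_null hTmeas]
    have hZ : volume {s : Fin k → ℝ | MvPolynomial.eval s (Q.coeff j) = 0} = 0 := ih _ hj
    have hae : ∀ᵐ s : Fin k → ℝ ∂volume, MvPolynomial.eval s (Q.coeff j) ≠ 0 := by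
      rw [MeasureTheory.ae_iff]
      simpa using hZ
    filter_upwards [hae] with s hs
    have hQs : Polynomial.map (MvPolynomial.eval s) Q ≠ 0 := by
      intro h
      apply hs
      rw [← Polynomial.coeff_map, h, Polynomial.coeff_zero]
    have hsec : (Prod.mk s ⁻¹' T) = {a : ℝ | Polynomial.IsRoot (Polynomial.map (MvPolynomial.eval s) Q) a} := by
      ext a
      simp only [Set.mem_preimage, hT, Set.mem_setOf_eq, Polynomial.IsRoot]
      rw [MvPolynomial.eval_eq_eval_mv_eval']
    rw [hsec]
    exact Set.Finite.measure_zero (Polynomial.finite_setOf_isRoot hQs) volume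



noncomputable def Xe (k : ℕ) (j : ℕ) : MvPolynomial (Fin k) ℝ :=
  if h : j < k then MvPolynomial.X ⟨j, h⟩ else 0

noncomputable def Ye (k : ℕ) (y : Fin k → ℝ) (j : ℕ) : ℝ :=
  if h : j < k then y ⟨j, h⟩ else 0

noncomputable def Pmat (n K k : ℕ) : MvPolynomial (Fin k) ℝ :=
  Matrix.det (Matrix.of fun i p : Fin n => Xe k (p.1 + (K - i.1)) + Xe k (p.1 + i.1))

lemma eval_Xe (k : ℕ) (y : Fin k → ℝ) (j : ℕ) :
    MvPolynomial.eval y (Xe k j) = Ye k y j := by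
  unfold Xe Ye
  split_ifs with h
  · simp
  · simp

lemma eval_Pmat (n K k : ℕ) (y : Fin k → ℝ) :
    MvPolynomial.eval y (Pmat n K k)
      = Matrix.det (Matrix.of fun i p : Fin n => Ye k y (p.1 + (K - i.1)) + Ye k y (p.1 + i.1)) := by
  rw [Pmat]
  refine (RingHom.map_det (MvPolynomial.eval y) _).trans ?_
  congr 1
  ext i p
  simp only [RingHom.mapMatrix_apply, Matrix.map_apply, Matrix.of_apply, map_add, eval_Xe]

lemma Pmat_ne_zero (n K k : ℕ) (hn : 0 < n) (hK : 2 * n ≤ K + 2) (hk : k = K + n) :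
    Pmat n K k ≠ 0 := by
  intro h
  set ystar : Fin k → ℝ := fun j => if (j : ℕ) = K then (1 : ℝ) else 0 with hystar
  have h0 : MvPolynomial.eval ystar (Pmat n K k) = 0 := by rw [h, map_zero]
  rw [eval_Pmat] at h0
  have hYe : ∀ j : ℕ, Ye k ystar j = if j = K then 1 else 0 := by
    intro j
    unfold Ye
    by_cases h1 : j < k
    · rw [dif_pos h1]
    · rw [dif_neg h1, if_neg (by omega)]
  have hD : (Matrix.of fun i p : Fin n => Ye k ystar (p.1 + (K - i.1)) + Ye k ystar (p.1 + i.1))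
      = Matrix.diagonal (fun i : Fin n => if 2 * i.1 = K then (2 : ℝ) else 1) := by
    ext i p
    have hip : i.1 < n := i.2
    have hpp : p.1 < n := p.2
    rw [Matrix.of_apply, hYe, hYe]
    by_cases hd : p = i
    · subst hd
      rw [Matrix.diagonal_apply_eq, if_pos (show p.1 + (K - p.1) = K by omega)]
      by_cases h2 : 2 * p.1 = K
      · rw [if_pos (by omega), if_pos h2]; norm_num
      · rw [if_neg (by omega), if_neg h2]; norm_num
    · have hne : ¬ (p.1 + (K - i.1) = K) := fun hcon => hd (Fin.ext (by omega))
      have hne2 : ¬ (p.1 + i.1 = K) := fun hcon => hd (Fin.ext (by omega))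
      rw [if_neg hne, if_neg hne2, Matrix.diagonal_apply_ne' _ hd]
      norm_num
  rw [hD, Matrix.det_diagonal] at h0
  have : (0:ℝ) < ∏ i : Fin n, (if 2 * i.1 = K then (2 : ℝ) else 1) :=
    Finset.prod_pos fun i _ => by split_ifs <;> norm_num
  exact this.ne' h0

/-- Theorem 3.1: with `m = n + k`, `k ≥ 3n-2` if `m - 2n + 1 = k - n + 1` is odd and
`k ≥ 3n-1` if it is even, for Lebesgue-almost every background `y ∈ ℝᵏ` the following
holds: for every signal `x ∈ ℝⁿ`, with measurements `b_i = |(F z)_i|` for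
`z = (x; y) ∈ ℝ^m`, every `u ∈ ℝ^m` whose last `k` entries equal `y` and which satisfies
the stationarity (fixed-point) condition `u = ũ` must equal `z` — the stationary point is
the unique global optimum of the loss over the constraint set `Ω`. -/
theorem stmt14 (n k : ℕ) (hn : 1 ≤ n)
    (hodd : Odd (k - n + 1) → 3 * n - 2 ≤ k)
    (heven : ¬ Odd (k - n + 1) → 3 * n - 1 ≤ k) :
    ∀ᵐ y : Fin k → ℝ ∂volume,
      ∀ x u : ℕ → ℝ,
        (∀ l : Fin k, u (n + l.1) = y l) →
        (∀ l < n + k,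
          (u l : ℂ) =
            utilde (n + k)
              (fun i => ‖dft (n + k)
                (fun p =>
                  ((zhatR n k (fun j => if h : j < k then y ⟨j, h⟩ else 0) x p : ℝ) : ℂ)) i‖)
              (fun p => (u p : ℂ)) l) →
        ∀ i < n + k,
          u i = zhatR n k (fun j => if h : j < k then y ⟨j, h⟩ else 0) x i := by
  have hkn : n ≤ k := by
    by_cases hlt : k < n
    · have h1 : Odd (k - n + 1) := by
        rw [show k - n = 0 from by omega]
        exact odd_one
      have := hodd h1
      omega
    · omega
  have hK : 2 * n ≤ (k - n) + 2 := by
    by_cases hpar : Odd (k - n + 1)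
    · have := hodd hpar; omega
    · have := heven hpar; omega
  have hP := mvpoly_null k (Pmat n (k - n) k)
    (Pmat_ne_zero n (k - n) k (by omega) hK (by omega))
  have hae : ∀ᵐ y : Fin k → ℝ ∂volume, MvPolynomial.eval y (Pmat n (k - n) k) ≠ 0 := by
    rw [MeasureTheory.ae_iff]
    simpa using hP
  filter_upwards [hae] with y hy
  intro x u hu hfix
  set K := k - n with hKdef
  set Y : ℕ → ℝ := fun j => if h : j < k then y ⟨j, h⟩ else 0 with hYdef
  set z : ℕ → ℝ := zhatR n k Y x with hzdef
  have hm0 : 0 < n + k := by omega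
  have hzY : ∀ j, j < k → z (n + j) = Y j := by
    intro j hj
    simp only [hzdef, zhatR]
    rw [if_neg (by omega), if_pos (by omega), show n + j - n = j from by omega]
  have huz : ∀ l, n ≤ l → l < n + k → u l = z l := by
    intro l h1 h2
    have h4 : n + (l - n) = l := by omega
    have h5 : u l = y ⟨l - n, by omega⟩ := by
      have h3 := hu ⟨l - n, by omega⟩
      simpa [h4] using h3
    have h6 : z l = Y (l - n) := by
      conv_lhs => rw [← h4]
      exact hzY (l - n) (by omega)
    rw [h5, h6]
    simp only [hYdef]
    rw [dif_pos (show l - n < k from by omega)]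
  have hb : ∀ i < n + k, ‖dft (n + k) (fun p => (u p : ℂ)) i‖
      = ‖dft (n + k) (fun p => (z p : ℂ)) i‖ := by
    intro i hi
    exact abs_dft_fixed (n + k) hm0 _ _ hfix i hi (norm_nonneg _)
  have hcorr := corr_eq (n + k) hm0 u z hb
  have hsys : ∀ iq : Fin n, ∑ p ∈ Finset.range n,
      (u p - z p) * (Y (p + (K - iq.1)) + Y (p + iq.1)) = 0 := by
    intro iq
    have hiq : iq.1 < n := iq.2
    have ht1 : n ≤ n + (K - iq.1) := Nat.le_add_right _ _
    have ht2 : (n + (K - iq.1)) + n ≤ n + k := by omega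
    have hs := split_corr n k (by omega) u z huz (n + (K - iq.1)) ht1 ht2 (hcorr _)
    rw [← hs]
    refine Finset.sum_congr rfl fun p hp => ?_
    have hp' := Finset.mem_range.1 hp
    have e1 : z (p + (n + (K - iq.1))) = Y (p + (K - iq.1)) := by
      rw [show p + (n + (K - iq.1)) = n + (p + (K - iq.1)) from by omega]
      exact hzY _ (by omega)
    have e2 : z (p + ((n + k) - (n + (K - iq.1)))) = Y (p + iq.1) := by
      rw [show p + ((n + k) - (n + (K - iq.1))) = n + (p + iq.1) from by omega]
      exact hzY _ (by omega)
    rw [e1, e2]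
  have hy' : (Matrix.of fun i p : Fin n =>
      Ye k y (p.1 + (K - i.1)) + Ye k y (p.1 + i.1)).det ≠ 0 := by
    rw [eval_Pmat] at hy
    exact hy
  have hmv : (Matrix.of fun i p : Fin n =>
      Ye k y (p.1 + (K - i.1)) + Ye k y (p.1 + i.1)).mulVec
        (fun p : Fin n => u p.1 - z p.1) = 0 := by
    funext iq
    simp only [Matrix.mulVec, dotProduct, Matrix.of_apply, Pi.zero_apply]
    have h8 : ∑ p : Fin n, (u p.1 - z p.1) * (Y (p.1 + (K - iq.1)) + Y (p.1 + iq.1)) = 0 :=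
      (Fin.sum_univ_eq_sum_range
        (fun p => (u p - z p) * (Y (p + (K - iq.1)) + Y (p + iq.1))) n).trans (hsys iq)
    rw [← h8]
    exact Finset.sum_congr rfl fun p _ => mul_comm _ _
  have hd0 := Matrix.eq_zero_of_mulVec_eq_zero hy' hmv
  intro i hi
  by_cases hin : i < n
  · have h9 : u i - z i = 0 := congrFun hd0 ⟨i, hin⟩
    exact sub_eq_zero.1 h9
  · exact huz i (by omega) hi
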